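/- arXiv:2005.09369 — 5 statements merged into one kernel-verified Lean document; each statement's English description precedes it below -/
import Mathlib

section
/- Let λ > 0 and μ ∈ ℝ. There exists a continuous function u : [0,1] → ℝ, not identically zero, such that u − λ·Ku = μ·u (pointwise on [0,1]) if and only if μ = 1 − λ/(nπ)² for some integer n ≥ 1. -/
open Set

noncomputable def Kop (f : ℝ → ℝ) (x : ℝ) : ℝ :=
  (∫ s in (0:ℝ)..x, (s - x) * f s) - x * ∫ s in (0:ℝ)..1, (s - 1) * f s

lemma hd_aux (a x s : ℝ) (ha : a ≠ 0) :
    HasDerivAt (fun t => -(t-x)*Real.cos (a*t)/a + Real.sin (a*t)/a^2)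
      ((s-x)*Real.sin (a*s)) s := by
  have hcos : HasDerivAt (fun t => Real.cos (a*t)) (-Real.sin (a*s)*a) s := by
    have h : HasDerivAt _ _ s := (Real.hasDerivAt_cos (a*s)).comp s ((hasDerivAt_id s).const_mul a)
    simpa [Function.comp_def] using h
  have hsin : HasDerivAt (fun t => Real.sin (a*t)) (Real.cos (a*s)*a) s := by
    have h : HasDerivAt _ _ s := (Real.hasDerivAt_sin (a*s)).comp s ((hasDerivAt_id s).const_mul a)
    simpa [Function.comp_def] using h
  have hlin : HasDerivAt (fun t => -(t-x)) (-1 : ℝ) s := by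
    exact ((hasDerivAt_id s).sub_const x).neg
  have h1 : HasDerivAt _ _ s := ((hlin.mul hcos).div_const a).add (hsin.div_const (a^2))
  convert h1 using 1
  · rfl
  · rfl
  · rfl
  field_simp
  ring

lemma int_aux (a x y : ℝ) (ha : a ≠ 0) :
    ∫ s in (0:ℝ)..y, (s - x) * Real.sin (a*s)
      = (-(y-x)*Real.cos (a*y)/a + Real.sin (a*y)/a^2) - (x/a) := by
  have := intervalIntegral.integral_eq_sub_of_hasDerivAt
    (f := fun t => -(t-x)*Real.cos (a*t)/a + Real.sin (a*t)/a^2)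
    (f' := fun s => (s-x)*Real.sin (a*s)) (a := (0:ℝ)) (b := y)
    (fun s _ => hd_aux a x s ha)
    (by apply Continuous.intervalIntegrable; continuity)
  rw [this]
  simp

lemma Kop_sin (a x : ℝ) (ha : a ≠ 0) (hsa : Real.sin a = 0) :
    Kop (fun s => Real.sin (a*s)) x = Real.sin (a*x)/a^2 := by
  unfold Kop
  rw [int_aux a x x ha, int_aux a 1 1 ha]
  simp [hsa]
  ring

section fwd
variable {w : ℝ → ℝ} (hw : Continuous w)

noncomputable def Fi (w : ℝ → ℝ) (x : ℝ) : ℝ := ∫ s in (0:ℝ)..x, w s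
noncomputable def Gi (w : ℝ → ℝ) (x : ℝ) : ℝ := ∫ s in (0:ℝ)..x, s * w s
noncomputable def Ci (w : ℝ → ℝ) : ℝ := ∫ s in (0:ℝ)..1, (s - 1) * w s

include hw

lemma hid : Continuous fun s : ℝ => s * w s := continuous_id.mul hw


lemma hasDerivAt_Fi (x : ℝ) : HasDerivAt (Fi w) (w x) x :=
  intervalIntegral.integral_hasDerivAt_right (hw.intervalIntegrable _ _)
    hw.aestronglyMeasurable.stronglyMeasurableAtFilter hw.continuousAt

lemma hasDerivAt_Gi (x : ℝ) : HasDerivAt (Gi w) (x * w x) x :=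
  intervalIntegral.integral_hasDerivAt_right
    ((hid hw).intervalIntegrable _ _)
    (hid hw).aestronglyMeasurable.stronglyMeasurableAtFilter
    (hid hw).continuousAt

lemma Kop_eq (x : ℝ) : Kop w x = Gi w x - x * Fi w x - x * Ci w := by
  unfold Kop Gi Fi Ci
  have h1 : ∫ s in (0:ℝ)..x, (s - x) * w s
      = (∫ s in (0:ℝ)..x, s * w s) - ∫ s in (0:ℝ)..x, x * w s := by
    rw [← intervalIntegral.integral_sub (f := fun s => s * w s) (g := fun s => x * w s) ((hid hw).intervalIntegrable _ _)
      ((continuous_const.mul hw).intervalIntegrable _ _)]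
    congr 1; ext s; ring
  rw [h1, intervalIntegral.integral_const_mul]

lemma Ci_eq : Ci w = Gi w 1 - Fi w 1 := by
  unfold Gi Fi Ci
  rw [← intervalIntegral.integral_sub ((hid hw).intervalIntegrable _ _)
      (hw.intervalIntegrable _ _)]
  congr 1; ext s; ring

lemma hasDerivAt_psi (x : ℝ) :
    HasDerivAt (fun x => Gi w x - x * Fi w x - x * Ci w) (-(Fi w x) - Ci w) x := by
  have h : HasDerivAt _ _ x := ((hasDerivAt_Gi hw x).sub
    (((hasDerivAt_id x).mul (hasDerivAt_Fi hw x)))).sub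
    ((hasDerivAt_id x).const_mul (Ci w))
  convert h using 1
  · rfl
  · rfl
  · funext y; simp; ring
  · simp

end fwd

lemma zero_deriv_of_eqOn_zero {f : ℝ → ℝ} {f' : ℝ} {x : ℝ} (hx : x ∈ Ioo (0:ℝ) 1)
    (hf : HasDerivAt f f' x) (h0 : ∀ y ∈ Icc (0:ℝ) 1, f y = 0) : f' = 0 := by
  have hev : f =ᶠ[nhds x] (fun _ => (0:ℝ)) := by
    filter_upwards [Ioo_mem_nhds hx.1 hx.2] with y hy
    exact h0 y (Ioo_subset_Icc_self hy)
  have : HasDerivAt f 0 x := (hasDerivAt_const x (0:ℝ)).congr_of_eventuallyEq hev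
  exact hf.unique this

lemma fwd (lam μ : ℝ) (hlam : 0 < lam) (u : ℝ → ℝ) (hu : ContinuousOn u (Icc 0 1))
    (hne : ∃ x ∈ Icc (0:ℝ) 1, u x ≠ 0)
    (heq : ∀ x ∈ Icc (0:ℝ) 1, u x - lam * Kop u x = μ * u x) :
    ∃ n : ℕ, 1 ≤ n ∧ μ = 1 - lam / ((n : ℝ) * Real.pi) ^ 2 := by
  classical
  -- extend u continuously to ℝ
  set w : ℝ → ℝ := fun x => u (max 0 (min x 1)) with hw_def
  have hproj : Continuous fun x : ℝ => max 0 (min x 1) :=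
    continuous_const.max (continuous_id.min continuous_const)
  have hprojmem : ∀ x : ℝ, max 0 (min x 1) ∈ Icc (0:ℝ) 1 := by
    intro x
    constructor
    · exact le_max_left _ _
    · exact max_le zero_le_one (min_le_right _ _)
  have hw : Continuous w := hu.comp_continuous hproj hprojmem
  have hwu : ∀ x ∈ Icc (0:ℝ) 1, w x = u x := by
    intro x hx
    have : max 0 (min x 1) = x := by
      rw [min_eq_left hx.2, max_eq_right hx.1]
    simp only [hw_def, this]
  -- Kop u = Kop w on [0,1]
  have hKop : ∀ x ∈ Icc (0:ℝ) 1, Kop u x = Kop w x := by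
    intro x hx
    unfold Kop
    have h1 : (∫ s in (0:ℝ)..x, (s - x) * u s) = ∫ s in (0:ℝ)..x, (s - x) * w s := by
      apply intervalIntegral.integral_congr
      intro s hs
      rw [uIcc_of_le hx.1] at hs
      show (s - x) * u s = (s - x) * w s
      rw [hwu s ⟨hs.1, le_trans hs.2 hx.2⟩]
    have h2 : (∫ s in (0:ℝ)..1, (s - 1) * u s) = ∫ s in (0:ℝ)..1, (s - 1) * w s := by
      apply intervalIntegral.integral_congr
      intro s hs
      rw [uIcc_of_le zero_le_one] at hs
      show (s - 1) * u s = (s - 1) * w s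
      rw [hwu s hs]
    rw [h1, h2]
  -- the rewritten equation
  have heqw : ∀ x ∈ Icc (0:ℝ) 1,
      lam * (Gi w x - x * Fi w x - x * Ci w) = (1 - μ) * w x := by
    intro x hx
    have h := heq x hx
    rw [hKop x hx, Kop_eq hw] at h
    rw [hwu x hx]
    linarith
  obtain ⟨x₀, hx₀, hx₀ne⟩ := hne
  -- helper: w = 0 on Icc gives contradiction
  have hcontra : ¬ (∀ x ∈ Icc (0:ℝ) 1, w x = 0) := by
    intro h
    exact hx₀ne (by rw [← hwu x₀ hx₀]; exact h x₀ hx₀)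
  by_cases hμ : μ = 1
  · -- ψ = 0 on Icc, deduce w = 0 on Icc, contradiction
    exfalso
    have hψ0 : ∀ x ∈ Icc (0:ℝ) 1, Gi w x - x * Fi w x - x * Ci w = 0 := by
      intro x hx
      have := heqw x hx
      rw [hμ] at this
      simp at this
      rcases this with h | h
      · linarith
      · linarith
    have hFC : ∀ x ∈ Icc (0:ℝ) 1, Fi w x + Ci w = 0 := by
      have hIoo : ∀ x ∈ Ioo (0:ℝ) 1, Fi w x + Ci w = 0 := by
        intro x hx
        have := zero_deriv_of_eqOn_zero hx (hasDerivAt_psi hw x) hψ0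
        linarith
      have hcl : EqOn (fun x => Fi w x + Ci w) (fun _ => (0:ℝ)) (Icc (0:ℝ) 1) := by
        rw [← closure_Ioo (zero_ne_one)]
        have hFc : Continuous (Fi w) :=
          continuous_iff_continuousAt.mpr fun x => (hasDerivAt_Fi hw x).continuousAt
        exact EqOn.closure hIoo (hFc.add continuous_const) continuous_const
      intro x hx
      exact hcl hx
    have hC : Ci w = 0 := by
      have := hFC 0 ⟨le_refl 0, zero_le_one⟩
      have hF0 : Fi w 0 = 0 := intervalIntegral.integral_same
      linarith
    have hF : ∀ x ∈ Icc (0:ℝ) 1, Fi w x = 0 := by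
      intro x hx
      have := hFC x hx
      linarith
    have hw0 : ∀ x ∈ Icc (0:ℝ) 1, w x = 0 := by
      have hIoo : ∀ x ∈ Ioo (0:ℝ) 1, w x = 0 :=
        fun x hx => zero_deriv_of_eqOn_zero hx (hasDerivAt_Fi hw x) hF
      have hcl : EqOn w (fun _ => (0:ℝ)) (Icc (0:ℝ) 1) := by
        rw [← closure_Ioo (zero_ne_one)]
        exact EqOn.closure hIoo hw continuous_const
      exact fun x hx => hcl hx
    exact hcontra hw0
  · -- μ ≠ 1
    set β : ℝ := lam / (1 - μ) with hβ_def
    have h1μ : (1:ℝ) - μ ≠ 0 := fun h => hμ (by linarith)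
    have hβ0 : β ≠ 0 := div_ne_zero (ne_of_gt hlam) h1μ
    set v : ℝ → ℝ := fun x => β * (Gi w x - x * Fi w x - x * Ci w) with hv_def
    set v1 : ℝ → ℝ := fun x => β * (-(Fi w x) - Ci w) with hv1_def
    have hvw : ∀ x ∈ Icc (0:ℝ) 1, v x = w x := by
      intro x hx
      have h := heqw x hx
      simp only [hv_def, hβ_def]
      field_simp
      linarith [mul_comm (w x) (1 - μ)]
    have hv' : ∀ x, HasDerivAt v (v1 x) x := fun x =>
      ((hasDerivAt_psi hw x)).const_mul β
    have hv1' : ∀ x, HasDerivAt v1 (-(β * w x)) x := by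
      intro x
      have h : HasDerivAt _ _ x := (((hasDerivAt_Fi hw x).neg).sub_const (Ci w)).const_mul β
      convert h using 1
      · rfl
      · rfl
      · funext y; simp only [hv1_def, Pi.neg_apply]
      ring
    have hvc : Continuous v :=
      continuous_iff_continuousAt.mpr fun x => (hv' x).continuousAt
    have hv1c : Continuous v1 :=
      continuous_iff_continuousAt.mpr fun x => (hv1' x).continuousAt
    have hv0 : v 0 = 0 := by
      simp [hv_def, Gi, intervalIntegral.integral_same]
    have hv1at1 : v 1 = 0 := by
      simp only [hv_def, Ci_eq hw]
      ring
    -- helper to finish from v = 0 on Icc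
    have hfinish : (∀ x ∈ Icc (0:ℝ) 1, v x = 0) → False := by
      intro h
      exact hcontra fun x hx => by rw [← hvw x hx]; exact h x hx
    rcases lt_trichotomy β 0 with hβneg | hβzero | hβpos
    · -- β < 0 : integration by parts
      exfalso
      have hq : ∀ x, HasDerivAt (fun x => v x * v1 x)
          (v1 x * v1 x + v x * (-(β * w x))) x := fun x => (hv' x).mul (hv1' x)
      have hint : ∫ x in (0:ℝ)..1, (v1 x * v1 x + v x * (-(β * w x)))
          = v 1 * v1 1 - v 0 * v1 0 := by
        exact intervalIntegral.integral_eq_sub_of_hasDerivAt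
          (fun x _ => hq x)
          (((hv1c.mul hv1c).add (hvc.mul ((continuous_const.mul hw).neg))).intervalIntegrable _ _)
      rw [hv0, hv1at1] at hint
      simp only [zero_mul, sub_self] at hint
      rw [intervalIntegral.integral_add (f := fun x => v1 x * v1 x) (g := fun x => v x * -(β * w x)) ((hv1c.mul hv1c).intervalIntegrable _ _)
        ((hvc.mul ((continuous_const.mul hw).neg)).intervalIntegrable _ _)] at hint
      have hvw2 : (∫ x in (0:ℝ)..1, v x * -(β * w x)) = -β * ∫ x in (0:ℝ)..1, v x * v x := by
        rw [← intervalIntegral.integral_const_mul]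
        apply intervalIntegral.integral_congr
        intro x hx
        rw [uIcc_of_le zero_le_one] at hx
        show v x * -(β * w x) = -β * (v x * v x)
        rw [← hvw x hx]
        ring
      rw [hvw2] at hint
      have hI2 : (0:ℝ) ≤ ∫ x in (0:ℝ)..1, v x * v x :=
        intervalIntegral.integral_nonneg zero_le_one (fun x _ => mul_self_nonneg _)
      have hI1 : (0:ℝ) ≤ ∫ x in (0:ℝ)..1, v1 x * v1 x :=
        intervalIntegral.integral_nonneg zero_le_one (fun x _ => mul_self_nonneg _)
      have hI1z : (∫ x in (0:ℝ)..1, v1 x * v1 x) = 0 := by nlinarith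
      have hae : (fun x => v1 x * v1 x) =ᵐ[MeasureTheory.volume.restrict (Ioc (0:ℝ) 1)]
          (0 : ℝ → ℝ) := by
        rw [← intervalIntegral.integral_eq_zero_iff_of_le_of_nonneg_ae zero_le_one
          (Filter.Eventually.of_forall fun x => mul_self_nonneg _)
          ((hv1c.mul hv1c).intervalIntegrable _ _)]
        exact hI1z
      have hIoc : EqOn (fun x => v1 x * v1 x) (fun _ => (0:ℝ)) (Ioc (0:ℝ) 1) :=
        MeasureTheory.Measure.eqOn_Ioc_of_ae_eq MeasureTheory.volume hae
          (hv1c.mul hv1c).continuousOn continuousOn_const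
      have hv1Icc : ∀ x ∈ Icc (0:ℝ) 1, v1 x = 0 := by
        have hcl : EqOn (fun x => v1 x * v1 x) (fun _ => (0:ℝ)) (Icc (0:ℝ) 1) := by
          rw [← closure_Ioc (zero_ne_one)]
          exact EqOn.closure hIoc (hv1c.mul hv1c) continuous_const
        intro x hx
        have := hcl hx
        simp only at this
        nlinarith [this]
      have hconst := constant_of_has_deriv_right_zero (f := v) (a := (0:ℝ)) (b := 1)
        hvc.continuousOn (fun x hx => by
          have h3 : HasDerivWithinAt v (v1 x) (Ici x) x := (hv' x).hasDerivWithinAt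
          rwa [hv1Icc x (Ico_subset_Icc_self hx)] at h3)
      apply hfinish
      intro x hx
      rw [hconst x hx, hv0]
    · exact absurd hβzero hβ0
    · -- β > 0 : ODE uniqueness gives sine solution
      set ω : ℝ := Real.sqrt β with hω_def
      have hωpos : 0 < ω := Real.sqrt_pos.mpr hβpos
      have hωsq : ω ^ 2 = β := Real.sq_sqrt hβpos.le
      set d : ℝ := v1 0 with hd_def
      set g1 : ℝ → ℝ := fun t => (d / ω) * Real.sin (ω * t) with hg1_def
      set g2 : ℝ → ℝ := fun t => d * Real.cos (ω * t) with hg2_def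
      have hg1' : ∀ t, HasDerivAt g1 (g2 t) t := by
        intro t
        have h : HasDerivAt _ _ t := (((Real.hasDerivAt_sin (ω*t)).comp t
          ((hasDerivAt_id t).const_mul ω))).const_mul (d/ω)
        simp only [Function.comp] at h
        convert h using 1
        · rfl
        · rfl
        field_simp
        ring
      have hg2' : ∀ t, HasDerivAt g2 (-β * g1 t) t := by
        intro t
        have h : HasDerivAt _ _ t := (((Real.hasDerivAt_cos (ω*t)).comp t
          ((hasDerivAt_id t).const_mul ω))).const_mul d
        simp only [Function.comp] at h
        convert h using 1
        · rfl
        · rfl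
        simp only [hg1_def]
        rw [← hωsq]
        field_simp
      have hg1c : Continuous g1 :=
        continuous_iff_continuousAt.mpr fun t => (hg1' t).continuousAt
      have hg2c : Continuous g2 :=
        continuous_iff_continuousAt.mpr fun t => (hg2' t).continuousAt
      set V : ℝ → ℝ × ℝ → ℝ × ℝ := fun _ p => (p.2, -β * p.1) with hV_def
      have hco : ((Real.toNNReal (1 + β)) : ℝ) = 1 + β :=
        Real.coe_toNNReal _ (by linarith)
      have hlip : ∀ t : ℝ, LipschitzWith (Real.toNNReal (1 + β)) (V t) := by
        intro t
        apply LipschitzWith.of_dist_le_mul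
        intro p q
        rw [hco]
        simp only [hV_def, Prod.dist_eq, Real.dist_eq]
        have h1 : |p.1 - q.1| ≤ max |p.1 - q.1| |p.2 - q.2| := le_max_left _ _
        have h2 : |p.2 - q.2| ≤ max |p.1 - q.1| |p.2 - q.2| := le_max_right _ _
        have h3 : |-β * p.1 - -β * q.1| = β * |p.1 - q.1| := by
          rw [show -β * p.1 - -β * q.1 = -β * (p.1 - q.1) by ring, abs_mul,
            abs_neg, abs_of_pos hβpos]
        have h0 : (0:ℝ) ≤ |p.1 - q.1| := abs_nonneg _
        apply max_le
        · nlinarith [abs_nonneg (p.2 - q.2)]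
        · rw [h3]; nlinarith
      have hfderiv : ∀ t ∈ Ico (0:ℝ) 1,
          HasDerivWithinAt (fun t => (v t, v1 t)) (V t (v t, v1 t)) (Ici t) t := by
        intro t ht
        have hweq : w t = v t := (hvw t (Ico_subset_Icc_self ht)).symm
        have h2 : HasDerivAt v1 (-β * v t) t := by
          have h3 := hv1' t
          rw [hweq] at h3
          convert h3 using 1
          ring
        exact (((hv' t).prodMk h2).hasDerivWithinAt :
          HasDerivWithinAt _ (v1 t, -β * v t) (Ici t) t)
      have hgderiv : ∀ t ∈ Ico (0:ℝ) 1,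
          HasDerivWithinAt (fun t => (g1 t, g2 t)) (V t (g1 t, g2 t)) (Ici t) t := by
        intro t ht
        exact (((hg1' t).prodMk (hg2' t)).hasDerivWithinAt :
          HasDerivWithinAt _ (g2 t, -β * g1 t) (Ici t) t)
      have hinit : (v 0, v1 0) = (g1 0, g2 0) := by
        simp only [hg1_def, hg2_def, mul_zero, Real.sin_zero, Real.cos_zero]
        rw [hv0]
        simp [hd_def]
      have huniq : EqOn (fun t => (v t, v1 t)) (fun t => (g1 t, g2 t)) (Icc (0:ℝ) 1) :=
        ODE_solution_unique_of_mem_Icc_right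
          (fun t _ => (hlip t).lipschitzOnWith (s := univ))
          ((hvc.prodMk hv1c).continuousOn) hfderiv (fun _ _ => mem_univ _)
          ((hg1c.prodMk hg2c).continuousOn) hgderiv (fun _ _ => mem_univ _)
          hinit
      have hveq : ∀ t ∈ Icc (0:ℝ) 1, v t = g1 t := by
        intro t ht
        exact congrArg Prod.fst (huniq ht)
      by_cases hd0 : d = 0
      · exfalso
        apply hfinish
        intro x hx
        rw [hveq x hx]
        simp [hg1_def, hd0]
      · have hsin : Real.sin ω = 0 := by
          have h := hveq 1 ⟨zero_le_one, le_refl 1⟩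
          rw [hv1at1] at h
          simp only [hg1_def, mul_one] at h
          rcases mul_eq_zero.mp h.symm with h' | h'
          · exact absurd h' (div_ne_zero hd0 (ne_of_gt hωpos))
          · exact h'
        obtain ⟨n, hn⟩ := Real.sin_eq_zero_iff.mp hsin
        have hnpos : 0 < n := by
          by_contra hc
          push_neg at hc
          have : (n:ℝ) * Real.pi ≤ 0 :=
            mul_nonpos_of_nonpos_of_nonneg (by exact_mod_cast hc) Real.pi_pos.le
          rw [hn] at this
          linarith
        refine ⟨n.toNat, by omega, ?_⟩
        have hcast : ((n.toNat : ℝ)) = (n : ℝ) := by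
          exact_mod_cast Int.toNat_of_nonneg hnpos.le
        rw [hcast, hn, hωsq]
        have hβμ : β * (1 - μ) = lam := by
          rw [hβ_def]
          field_simp
        have : (1:ℝ) - μ = lam / β := by
          field_simp
          linarith
        linarith [this]

/-- For `λ > 0` and `μ ∈ ℝ`: there is a continuous not-identically-zero `u` on `[0,1]`
with `u - λ·Ku = μ·u` pointwise on `[0,1]` iff `μ = 1 - λ/(nπ)²` for some `n ≥ 1`. -/
theorem stmt_7 (lam μ : ℝ) (hlam : 0 < lam) :
    (∃ u : ℝ → ℝ, ContinuousOn u (Icc 0 1) ∧ (∃ x ∈ Icc (0:ℝ) 1, u x ≠ 0) ∧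
      ∀ x ∈ Icc (0:ℝ) 1, u x - lam * Kop u x = μ * u x) ↔
    ∃ n : ℕ, 1 ≤ n ∧ μ = 1 - lam / ((n : ℝ) * Real.pi) ^ 2 := by
  constructor
  · rintro ⟨u, hu, hne, heq⟩
    exact fwd lam μ hlam u hu hne heq
  · rintro ⟨n, hn, hmu⟩
    set a : ℝ := (n : ℝ) * Real.pi with ha_def
    have hn' : (1:ℝ) ≤ n := by exact_mod_cast hn
    have hn0 : (0:ℝ) < n := by linarith
    have ha : a ≠ 0 := by positivity
    have hsa : Real.sin a = 0 := by
      simpa [ha_def] using Real.sin_nat_mul_pi n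
    refine ⟨fun s => Real.sin (a*s), Continuous.continuousOn (by continuity), ?_, ?_⟩
    · have h2n : (1:ℝ) ≤ 2*(n:ℝ) := by linarith
      refine ⟨1/(2*n), mem_Icc.mpr ⟨by positivity, by
        rw [div_le_one (show (0:ℝ) < 2*(n:ℝ) by positivity)]; linarith⟩, ?_⟩
      have h : a * (1/(2*(n:ℝ))) = Real.pi/2 := by
        field_simp [ha_def]; ring
      show Real.sin (a * (1/(2*(n:ℝ)))) ≠ 0
      rw [h, Real.sin_pi_div_two]
      norm_num
    · intro x _
      rw [Kop_sin a x ha hsa, hmu]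
      ring
end

section
/- Let a : [0,1] → ℝ and w₁ : [0,1] → ℝ be continuous and D₂ ∈ ℝ. Suppose w₂ : [0,1] → ℝ is twice continuously differentiable with w₂(0) = w₂(1) = 0 and −w₂''(x) = π² w₂(x) + D₂·sin(πx) + a(x) w₁(x) sin(πx) for all x ∈ [0,1]. Then D₂ = −2 ∫₀¹ a(x) w₁(x) sin²(πx) dx. -/
open Set

lemma sin_pi_sq_deriv (x : ℝ) :
    HasDerivAt (fun x : ℝ => x / 2 - Real.sin (2 * Real.pi * x) / (4 * Real.pi))
      (Real.sin (Real.pi * x) ^ 2) x := by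
  have hpi : Real.pi ≠ 0 := Real.pi_ne_zero
  have h1 : HasDerivAt (fun x : ℝ => 2 * Real.pi * x) (2 * Real.pi) x := by
    simpa using (hasDerivAt_id x).const_mul (2 * Real.pi)
  have h2 : HasDerivAt (fun x : ℝ => Real.sin (2 * Real.pi * x))
      (Real.cos (2 * Real.pi * x) * (2 * Real.pi)) x :=
    (Real.hasDerivAt_sin (2 * Real.pi * x)).comp x h1
  have h3 := ((hasDerivAt_id x).div_const 2).sub (h2.div_const (4 * Real.pi))
  refine h3.congr_deriv ?_
  have hsq : Real.sin (Real.pi * x) ^ 2 = 1 / 2 - Real.cos (2 * (Real.pi * x)) / 2 := by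
    have h2 := Real.sin_sq_add_cos_sq (Real.pi * x)
    rw [Real.cos_two_mul]
    nlinarith [h2]
  rw [hsq]
  have : 2 * Real.pi * x = 2 * (Real.pi * x) := by ring
  rw [this]
  field_simp
  ring

lemma integral_sin_pi_sq : (∫ x in (0:ℝ)..1, Real.sin (Real.pi * x) ^ 2) = 1 / 2 := by
  have hi : IntervalIntegrable (fun x : ℝ => Real.sin (Real.pi * x) ^ 2)
      MeasureTheory.volume 0 1 :=
    ((Real.continuous_sin.comp (continuous_const.mul continuous_id)).pow 2).intervalIntegrable 0 1
  have h := intervalIntegral.integral_eq_sub_of_hasDerivAt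
    (f := fun x : ℝ => x / 2 - Real.sin (2 * Real.pi * x) / (4 * Real.pi))
    (a := 0) (b := 1)
    (fun x _ => sin_pi_sq_deriv x) hi
  rw [h]
  simp [Real.sin_two_pi]

/-- If `w₂` is twice continuously differentiable on `[0,1]` with `w₂ 0 = w₂ 1 = 0` and
`-w₂'' = π² w₂ + D₂ sin(πx) + a(x) w₁(x) sin(πx)` on `[0,1]`, then
`D₂ = -2 ∫₀¹ a(x) w₁(x) sin²(πx) dx`. -/
theorem stmt_10 (a w₁ : ℝ → ℝ)
    (ha : ContinuousOn a (Icc 0 1)) (hw₁ : ContinuousOn w₁ (Icc 0 1)) (D₂ : ℝ)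
    (w₂ w₂' w₂'' : ℝ → ℝ)
    (hw₂' : ∀ x ∈ Icc (0:ℝ) 1, HasDerivWithinAt w₂ (w₂' x) (Icc 0 1) x)
    (hw₂'' : ∀ x ∈ Icc (0:ℝ) 1, HasDerivWithinAt w₂' (w₂'' x) (Icc 0 1) x)
    (hcont : ContinuousOn w₂'' (Icc 0 1))
    (h0 : w₂ 0 = 0) (h1 : w₂ 1 = 0)
    (heq : ∀ x ∈ Icc (0:ℝ) 1,
      -(w₂'' x) = Real.pi ^ 2 * w₂ x + D₂ * Real.sin (Real.pi * x)
        + a x * w₁ x * Real.sin (Real.pi * x)) :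
    D₂ = -2 * ∫ x in (0:ℝ)..1, a x * w₁ x * Real.sin (Real.pi * x) ^ 2 := by
  have huIcc : uIcc (0:ℝ) 1 = Icc 0 1 := uIcc_of_le zero_le_one
  have hw₂c : ContinuousOn w₂ (Icc 0 1) := fun x hx => (hw₂' x hx).continuousWithinAt
  have hw₂'c : ContinuousOn w₂' (Icc 0 1) := fun x hx => (hw₂'' x hx).continuousWithinAt
  set g : ℝ → ℝ := fun x => w₂'' x * Real.sin (Real.pi * x)
      + Real.pi ^ 2 * w₂ x * Real.sin (Real.pi * x) with hg
  set F : ℝ → ℝ := fun x => w₂' x * Real.sin (Real.pi * x)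
      - Real.pi * (w₂ x * Real.cos (Real.pi * x)) with hF
  have hsinc : Continuous fun x : ℝ => Real.sin (Real.pi * x) :=
    Real.continuous_sin.comp (continuous_const.mul continuous_id)
  have hcosc : Continuous fun x : ℝ => Real.cos (Real.pi * x) :=
    Real.continuous_cos.comp (continuous_const.mul continuous_id)
  have hgc : ContinuousOn g (Icc 0 1) := by
    apply ContinuousOn.add
    · exact hcont.mul hsinc.continuousOn
    · exact (continuousOn_const.mul hw₂c).mul hsinc.continuousOn
  have hgint : IntervalIntegrable g MeasureTheory.volume 0 1 :=
    ContinuousOn.intervalIntegrable (by rw [huIcc]; exact hgc)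
  have hFc : ContinuousOn F (Icc 0 1) := by
    apply ContinuousOn.sub
    · exact hw₂'c.mul hsinc.continuousOn
    · exact continuousOn_const.mul (hw₂c.mul hcosc.continuousOn)
  have hFderiv : ∀ x ∈ Ioo (0:ℝ) 1, HasDerivWithinAt F (g x) (Ioi x) x := by
    intro x hx
    have hmem : Icc (0:ℝ) 1 ∈ nhds x := Icc_mem_nhds hx.1 hx.2
    have hx' : x ∈ Icc (0:ℝ) 1 := Ioo_subset_Icc_self hx
    have hw2 : HasDerivAt w₂ (w₂' x) x := (hw₂' x hx').hasDerivAt hmem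
    have hw2' : HasDerivAt w₂' (w₂'' x) x := (hw₂'' x hx').hasDerivAt hmem
    have hpix : HasDerivAt (fun x : ℝ => Real.pi * x) Real.pi x := by
      simpa using (hasDerivAt_id x).const_mul Real.pi
    have hsin : HasDerivAt (fun x : ℝ => Real.sin (Real.pi * x))
        (Real.cos (Real.pi * x) * Real.pi) x :=
      (Real.hasDerivAt_sin (Real.pi * x)).comp x hpix
    have hcos : HasDerivAt (fun x : ℝ => Real.cos (Real.pi * x))
        (-Real.sin (Real.pi * x) * Real.pi) x :=
      (Real.hasDerivAt_cos (Real.pi * x)).comp x hpix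
    have hFd : HasDerivAt F
        ((w₂'' x * Real.sin (Real.pi * x) + w₂' x * (Real.cos (Real.pi * x) * Real.pi))
          - Real.pi * (w₂' x * Real.cos (Real.pi * x)
            + w₂ x * (-Real.sin (Real.pi * x) * Real.pi))) x :=
      (hw2'.mul hsin).sub (((hw2.mul hcos)).const_mul Real.pi)
    have : g x = (w₂'' x * Real.sin (Real.pi * x) + w₂' x * (Real.cos (Real.pi * x) * Real.pi))
          - Real.pi * (w₂' x * Real.cos (Real.pi * x)
            + w₂ x * (-Real.sin (Real.pi * x) * Real.pi)) := by
      rw [hg]; ring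
    rw [this]
    exact hFd.hasDerivWithinAt
  have hkey : (∫ x in (0:ℝ)..1, g x) = F 1 - F 0 :=
    intervalIntegral.integral_eq_sub_of_hasDeriv_right_of_le zero_le_one hFc hFderiv hgint
  have hF1 : F 1 = 0 := by simp [hF, h1, Real.sin_pi, mul_one]
  have hF0 : F 0 = 0 := by simp [hF, h0]
  rw [hF1, hF0, sub_zero] at hkey
  -- rewrite g using the ODE
  have hgeq : EqOn g (fun x => -(D₂ * Real.sin (Real.pi * x) ^ 2)
      - a x * w₁ x * Real.sin (Real.pi * x) ^ 2) (uIcc 0 1) := by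
    intro x hx
    rw [huIcc] at hx
    have := heq x hx
    have hw2'' : w₂'' x = -(Real.pi ^ 2 * w₂ x + D₂ * Real.sin (Real.pi * x)
        + a x * w₁ x * Real.sin (Real.pi * x)) := by linarith
    simp only [hg, hw2'']
    ring
  have hint1 : IntervalIntegrable (fun x => D₂ * Real.sin (Real.pi * x) ^ 2)
      MeasureTheory.volume 0 1 :=
    (continuous_const.mul ((Real.continuous_sin.comp (continuous_const.mul continuous_id)).pow 2)).intervalIntegrable 0 1
  have hint2 : IntervalIntegrable (fun x => a x * w₁ x * Real.sin (Real.pi * x) ^ 2)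
      MeasureTheory.volume 0 1 := by
    apply ContinuousOn.intervalIntegrable
    rw [huIcc]
    exact (ha.mul hw₁).mul (hsinc.pow 2).continuousOn
  have hsplit : (∫ x in (0:ℝ)..1, g x)
      = -(D₂ * ∫ x in (0:ℝ)..1, Real.sin (Real.pi * x) ^ 2)
        - ∫ x in (0:ℝ)..1, a x * w₁ x * Real.sin (Real.pi * x) ^ 2 := by
    have hsub := intervalIntegral.integral_sub
      (f := fun x => -(D₂ * Real.sin (Real.pi * x) ^ 2))
      (g := fun x => a x * w₁ x * Real.sin (Real.pi * x) ^ 2)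
      (μ := MeasureTheory.volume) (a := 0) (b := 1) hint1.neg hint2
    rw [intervalIntegral.integral_congr hgeq, hsub,
      intervalIntegral.integral_neg, intervalIntegral.integral_const_mul]
  rw [hkey, integral_sin_pi_sq] at hsplit
  linarith [hsplit]
end

section
/- Let a(x) = sin(5πx) and define w̃(x) = (1/π) ∫₀ˣ sin(5πs) sin²(πs) sin(πs − πx) ds for x ∈ [0,1]. Then −2 ∫₀¹ sin(5πx) w̃(x) sin²(πx) dx = −5/(256π²). -/
/-- The particular corrector for the weight `a(x) = sin(5πx)`:
`w̃(x) = (1/π) ∫₀ˣ sin(5πs) sin²(πs) sin(πs − πx) ds`. -/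
noncomputable def wTilde5 (x : ℝ) : ℝ :=
  (1 / Real.pi) * ∫ s in (0:ℝ)..x,
    Real.sin (5 * Real.pi * s) * Real.sin (Real.pi * s) ^ 2
      * Real.sin (Real.pi * s - Real.pi * x)

lemma sinE2 (t : ℝ) : Real.sin (2*t) = (2 : ℝ)*Real.sin t*Real.cos t := by
  rw [two_mul, Real.sin_add]; ring

lemma cosE2 (t : ℝ) : Real.cos (2*t) = Real.cos t^2 + (-1 : ℝ)*Real.sin t^2 := by
  rw [two_mul, Real.cos_add]; ring

lemma sinE3 (t : ℝ) : Real.sin (3*t) = (3 : ℝ)*Real.sin t*Real.cos t^2 + (-1 : ℝ)*Real.sin t^3 := by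
  rw [show (3:ℝ)*t = 2*t + t by ring, Real.sin_add, sinE2, cosE2]; ring

lemma cosE3 (t : ℝ) : Real.cos (3*t) = Real.cos t^3 + (-3 : ℝ)*Real.sin t^2*Real.cos t := by
  rw [show (3:ℝ)*t = 2*t + t by ring, Real.cos_add, sinE2, cosE2]; ring

lemma sinE4 (t : ℝ) : Real.sin (4*t) = (4 : ℝ)*Real.sin t*Real.cos t^3 + (-4 : ℝ)*Real.sin t^3*Real.cos t := by
  rw [show (4:ℝ)*t = 3*t + t by ring, Real.sin_add, sinE3, cosE3]; ring

lemma cosE4 (t : ℝ) : Real.cos (4*t) = Real.cos t^4 + (-6 : ℝ)*Real.sin t^2*Real.cos t^2 + Real.sin t^4 := by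
  rw [show (4:ℝ)*t = 3*t + t by ring, Real.cos_add, sinE3, cosE3]; ring

lemma sinE5 (t : ℝ) : Real.sin (5*t) = (5 : ℝ)*Real.sin t*Real.cos t^4 + (-10 : ℝ)*Real.sin t^3*Real.cos t^2 + Real.sin t^5 := by
  rw [show (5:ℝ)*t = 4*t + t by ring, Real.sin_add, sinE4, cosE4]; ring

lemma cosE5 (t : ℝ) : Real.cos (5*t) = Real.cos t^5 + (-10 : ℝ)*Real.sin t^2*Real.cos t^3 + (5 : ℝ)*Real.sin t^4*Real.cos t := by
  rw [show (5:ℝ)*t = 4*t + t by ring, Real.cos_add, sinE4, cosE4]; ring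

lemma sinE6 (t : ℝ) : Real.sin (6*t) = (6 : ℝ)*Real.sin t*Real.cos t^5 + (-20 : ℝ)*Real.sin t^3*Real.cos t^3 + (6 : ℝ)*Real.sin t^5*Real.cos t := by
  rw [show (6:ℝ)*t = 5*t + t by ring, Real.sin_add, sinE5, cosE5]; ring

lemma cosE6 (t : ℝ) : Real.cos (6*t) = Real.cos t^6 + (-15 : ℝ)*Real.sin t^2*Real.cos t^4 + (15 : ℝ)*Real.sin t^4*Real.cos t^2 + (-1 : ℝ)*Real.sin t^6 := by
  rw [show (6:ℝ)*t = 5*t + t by ring, Real.cos_add, sinE5, cosE5]; ring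

lemma sinE7 (t : ℝ) : Real.sin (7*t) = (7 : ℝ)*Real.sin t*Real.cos t^6 + (-35 : ℝ)*Real.sin t^3*Real.cos t^4 + (21 : ℝ)*Real.sin t^5*Real.cos t^2 + (-1 : ℝ)*Real.sin t^7 := by
  rw [show (7:ℝ)*t = 6*t + t by ring, Real.sin_add, sinE6, cosE6]; ring

lemma cosE7 (t : ℝ) : Real.cos (7*t) = Real.cos t^7 + (-21 : ℝ)*Real.sin t^2*Real.cos t^5 + (35 : ℝ)*Real.sin t^4*Real.cos t^3 + (-7 : ℝ)*Real.sin t^6*Real.cos t := by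
  rw [show (7:ℝ)*t = 6*t + t by ring, Real.cos_add, sinE6, cosE6]; ring

lemma sinE8 (t : ℝ) : Real.sin (8*t) = (8 : ℝ)*Real.sin t*Real.cos t^7 + (-56 : ℝ)*Real.sin t^3*Real.cos t^5 + (56 : ℝ)*Real.sin t^5*Real.cos t^3 + (-8 : ℝ)*Real.sin t^7*Real.cos t := by
  rw [show (8:ℝ)*t = 7*t + t by ring, Real.sin_add, sinE7, cosE7]; ring

lemma cosE8 (t : ℝ) : Real.cos (8*t) = Real.cos t^8 + (-28 : ℝ)*Real.sin t^2*Real.cos t^6 + (70 : ℝ)*Real.sin t^4*Real.cos t^4 + (-28 : ℝ)*Real.sin t^6*Real.cos t^2 + Real.sin t^8 := by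
  rw [show (8:ℝ)*t = 7*t + t by ring, Real.cos_add, sinE7, cosE7]; ring

lemma sinE9 (t : ℝ) : Real.sin (9*t) = (9 : ℝ)*Real.sin t*Real.cos t^8 + (-84 : ℝ)*Real.sin t^3*Real.cos t^6 + (126 : ℝ)*Real.sin t^5*Real.cos t^4 + (-36 : ℝ)*Real.sin t^7*Real.cos t^2 + Real.sin t^9 := by
  rw [show (9:ℝ)*t = 8*t + t by ring, Real.sin_add, sinE8, cosE8]; ring

lemma cosE9 (t : ℝ) : Real.cos (9*t) = Real.cos t^9 + (-36 : ℝ)*Real.sin t^2*Real.cos t^7 + (126 : ℝ)*Real.sin t^4*Real.cos t^5 + (-84 : ℝ)*Real.sin t^6*Real.cos t^3 + (9 : ℝ)*Real.sin t^8*Real.cos t := by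
  rw [show (9:ℝ)*t = 8*t + t by ring, Real.cos_add, sinE8, cosE8]; ring

lemma sinE10 (t : ℝ) : Real.sin (10*t) = (10 : ℝ)*Real.sin t*Real.cos t^9 + (-120 : ℝ)*Real.sin t^3*Real.cos t^7 + (252 : ℝ)*Real.sin t^5*Real.cos t^5 + (-120 : ℝ)*Real.sin t^7*Real.cos t^3 + (10 : ℝ)*Real.sin t^9*Real.cos t := by
  rw [show (10:ℝ)*t = 9*t + t by ring, Real.sin_add, sinE9, cosE9]; ring

lemma cosE10 (t : ℝ) : Real.cos (10*t) = Real.cos t^10 + (-45 : ℝ)*Real.sin t^2*Real.cos t^8 + (210 : ℝ)*Real.sin t^4*Real.cos t^6 + (-210 : ℝ)*Real.sin t^6*Real.cos t^4 + (45 : ℝ)*Real.sin t^8*Real.cos t^2 + (-1 : ℝ)*Real.sin t^10 := by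
  rw [show (10:ℝ)*t = 9*t + t by ring, Real.cos_add, sinE9, cosE9]; ring

lemma sinE11 (t : ℝ) : Real.sin (11*t) = (11 : ℝ)*Real.sin t*Real.cos t^10 + (-165 : ℝ)*Real.sin t^3*Real.cos t^8 + (462 : ℝ)*Real.sin t^5*Real.cos t^6 + (-330 : ℝ)*Real.sin t^7*Real.cos t^4 + (55 : ℝ)*Real.sin t^9*Real.cos t^2 + (-1 : ℝ)*Real.sin t^11 := by
  rw [show (11:ℝ)*t = 10*t + t by ring, Real.sin_add, sinE10, cosE10]; ring

lemma cosE11 (t : ℝ) : Real.cos (11*t) = Real.cos t^11 + (-55 : ℝ)*Real.sin t^2*Real.cos t^9 + (330 : ℝ)*Real.sin t^4*Real.cos t^7 + (-462 : ℝ)*Real.sin t^6*Real.cos t^5 + (165 : ℝ)*Real.sin t^8*Real.cos t^3 + (-11 : ℝ)*Real.sin t^10*Real.cos t := by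
  rw [show (11:ℝ)*t = 10*t + t by ring, Real.cos_add, sinE10, cosE10]; ring

lemma sinE12 (t : ℝ) : Real.sin (12*t) = (12 : ℝ)*Real.sin t*Real.cos t^11 + (-220 : ℝ)*Real.sin t^3*Real.cos t^9 + (792 : ℝ)*Real.sin t^5*Real.cos t^7 + (-792 : ℝ)*Real.sin t^7*Real.cos t^5 + (220 : ℝ)*Real.sin t^9*Real.cos t^3 + (-12 : ℝ)*Real.sin t^11*Real.cos t := by
  rw [show (12:ℝ)*t = 11*t + t by ring, Real.sin_add, sinE11, cosE11]; ring

lemma cosE12 (t : ℝ) : Real.cos (12*t) = Real.cos t^12 + (-66 : ℝ)*Real.sin t^2*Real.cos t^10 + (495 : ℝ)*Real.sin t^4*Real.cos t^8 + (-924 : ℝ)*Real.sin t^6*Real.cos t^6 + (495 : ℝ)*Real.sin t^8*Real.cos t^4 + (-66 : ℝ)*Real.sin t^10*Real.cos t^2 + Real.sin t^12 := by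
  rw [show (12:ℝ)*t = 11*t + t by ring, Real.cos_add, sinE11, cosE11]; ring

lemma sinE13 (t : ℝ) : Real.sin (13*t) = (13 : ℝ)*Real.sin t*Real.cos t^12 + (-286 : ℝ)*Real.sin t^3*Real.cos t^10 + (1287 : ℝ)*Real.sin t^5*Real.cos t^8 + (-1716 : ℝ)*Real.sin t^7*Real.cos t^6 + (715 : ℝ)*Real.sin t^9*Real.cos t^4 + (-78 : ℝ)*Real.sin t^11*Real.cos t^2 + Real.sin t^13 := by
  rw [show (13:ℝ)*t = 12*t + t by ring, Real.sin_add, sinE12, cosE12]; ring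

lemma cosE13 (t : ℝ) : Real.cos (13*t) = Real.cos t^13 + (-78 : ℝ)*Real.sin t^2*Real.cos t^11 + (715 : ℝ)*Real.sin t^4*Real.cos t^9 + (-1716 : ℝ)*Real.sin t^6*Real.cos t^7 + (1287 : ℝ)*Real.sin t^8*Real.cos t^5 + (-286 : ℝ)*Real.sin t^10*Real.cos t^3 + (13 : ℝ)*Real.sin t^12*Real.cos t := by
  rw [show (13:ℝ)*t = 12*t + t by ring, Real.cos_add, sinE12, cosE12]; ring

lemma sinE14 (t : ℝ) : Real.sin (14*t) = (14 : ℝ)*Real.sin t*Real.cos t^13 + (-364 : ℝ)*Real.sin t^3*Real.cos t^11 + (2002 : ℝ)*Real.sin t^5*Real.cos t^9 + (-3432 : ℝ)*Real.sin t^7*Real.cos t^7 + (2002 : ℝ)*Real.sin t^9*Real.cos t^5 + (-364 : ℝ)*Real.sin t^11*Real.cos t^3 + (14 : ℝ)*Real.sin t^13*Real.cos t := by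
  rw [show (14:ℝ)*t = 13*t + t by ring, Real.sin_add, sinE13, cosE13]; ring

lemma cosE14 (t : ℝ) : Real.cos (14*t) = Real.cos t^14 + (-91 : ℝ)*Real.sin t^2*Real.cos t^12 + (1001 : ℝ)*Real.sin t^4*Real.cos t^10 + (-3003 : ℝ)*Real.sin t^6*Real.cos t^8 + (3003 : ℝ)*Real.sin t^8*Real.cos t^6 + (-1001 : ℝ)*Real.sin t^10*Real.cos t^4 + (91 : ℝ)*Real.sin t^12*Real.cos t^2 + (-1 : ℝ)*Real.sin t^14 := by
  rw [show (14:ℝ)*t = 13*t + t by ring, Real.cos_add, sinE13, cosE13]; ring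

lemma idA (t : ℝ) : Real.sin (5*t) * Real.sin t^2 * Real.sin t
    = (3*Real.cos (4*t) - 3*Real.cos (6*t) - Real.cos (2*t) + Real.cos (8*t))/8 := by
  rw [sinE5, cosE4, cosE6, cosE2, cosE8]
  linear_combination ((-1/8 : ℝ)*Real.cos t^2 + (1/4 : ℝ)*Real.cos t^4 + (-1/8 : ℝ)*Real.cos t^6 + (1/8 : ℝ)*Real.sin t^2 + (-9/4 : ℝ)*Real.sin t^2*Real.cos t^2 + (29/8 : ℝ)*Real.sin t^2*Real.cos t^4 + (1/2 : ℝ)*Real.sin t^4 + (-59/8 : ℝ)*Real.sin t^4*Real.cos t^2 + (7/8 : ℝ)*Real.sin t^6) * (Real.sin_sq_add_cos_sq t)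

lemma idB (t : ℝ) : Real.sin (5*t) * Real.sin t^2 * Real.cos t
    = (Real.sin (6*t) + Real.sin (4*t) - Real.sin (8*t) - Real.sin (2*t))/8 := by
  rw [sinE5, sinE6, sinE4, sinE8, sinE2]
  linear_combination ((-1/4 : ℝ)*Real.sin t*Real.cos t + (1/4 : ℝ)*Real.sin t*Real.cos t^3 + Real.sin t*Real.cos t^5 + (-3/4 : ℝ)*Real.sin t^3*Real.cos t + (-3 : ℝ)*Real.sin t^3*Real.cos t^3) * (Real.sin_sq_add_cos_sq t)

lemma idC (t : ℝ) : Real.sin (5*t) * Real.sin t^2 *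
      ((1/8) * (Real.cos t * ((3/4)*Real.sin (4*t) - (1/2)*Real.sin (6*t) - (1/2)*Real.sin (2*t) + (1/8)*Real.sin (8*t))
        - Real.sin t * (-(1/6)*Real.cos (6*t) - (1/4)*Real.cos (4*t) + (1/8)*Real.cos (8*t) + (1/2)*Real.cos (2*t)))
       + (5/192) * Real.sin t)
    = 5/512 - (9/512)*Real.cos (2*t) + (11/768)*Real.cos (4*t) - (7/512)*Real.cos (6*t)
      + (7/512)*Real.cos (8*t) - (5/512)*Real.cos (10*t) + (1/256)*Real.cos (12*t) - (1/1536)*Real.cos (14*t) := by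
  rw [sinE5, sinE4, sinE6, sinE2, sinE8, cosE6, cosE4, cosE8, cosE2, cosE10, cosE12, cosE14]
  linear_combination ((5/512 : ℝ) + (-1/128 : ℝ)*Real.cos t^2 + (5/768 : ℝ)*Real.cos t^4 + (-11/1536 : ℝ)*Real.cos t^6 + (5/768 : ℝ)*Real.cos t^8 + (-5/1536 : ℝ)*Real.cos t^10 + (1/1536 : ℝ)*Real.cos t^12 + (7/256 : ℝ)*Real.sin t^2 + (-17/256 : ℝ)*Real.sin t^2*Real.cos t^2 + (223/1536 : ℝ)*Real.sin t^2*Real.cos t^4 + (-47/192 : ℝ)*Real.sin t^2*Real.cos t^6 + (103/512 : ℝ)*Real.sin t^2*Real.cos t^8 + (-23/384 : ℝ)*Real.sin t^2*Real.cos t^10 + (1/24 : ℝ)*Real.sin t^4 + (-353/1536 : ℝ)*Real.sin t^4*Real.cos t^2 + (95/128 : ℝ)*Real.sin t^4*Real.cos t^4 + (-473/768 : ℝ)*Real.sin t^4*Real.cos t^6 + (-787/1536 : ℝ)*Real.sin t^4*Real.cos t^8 + (35/64 : ℝ)*Real.sin t^4*Real.cos t^10 + (85/1536 : ℝ)*Real.sin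 t^6 + (-19/64 : ℝ)*Real.sin t^6*Real.cos t^2 + (79/256 : ℝ)*Real.sin t^6*Real.cos t^4 + (71/24 : ℝ)*Real.sin t^6*Real.cos t^6 + (-245/64 : ℝ)*Real.sin t^6*Real.cos t^8 + (11/256 : ℝ)*Real.sin t^8 + (61/512 : ℝ)*Real.sin t^8*Real.cos t^2 + (-1959/512 : ℝ)*Real.sin t^8*Real.cos t^4 + (231/32 : ℝ)*Real.sin t^8*Real.cos t^6 + (-5/512 : ℝ)*Real.sin t^10 + (93/128 : ℝ)*Real.sin t^10*Real.cos t^2 + (-125/32 : ℝ)*Real.sin t^10*Real.cos t^4 + (-19/512 : ℝ)*Real.sin t^12 + (31/64 : ℝ)*Real.sin t^12*Real.cos t^2 + (-1/64 : ℝ)*Real.sin t^14) * (Real.sin_sq_add_cos_sq t)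

lemma hd_sin (k x : ℝ) : HasDerivAt (fun s => Real.sin (k * s)) (k * Real.cos (k * x)) x := by
  exact ((Real.hasDerivAt_sin (k*x)).comp x ((hasDerivAt_id x).const_mul k)).congr_deriv (by ring)

lemma hd_cos (k x : ℝ) : HasDerivAt (fun s => Real.cos (k * s)) (-(k * Real.sin (k * x))) x := by
  exact ((Real.hasDerivAt_cos (k*x)).comp x ((hasDerivAt_id x).const_mul k)).congr_deriv (by ring)

noncomputable def Ffun (x : ℝ) : ℝ → ℝ := fun s =>
  (1/(8*Real.pi)) * (Real.cos (Real.pi*x) *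
      ((3/4)*Real.sin (4*Real.pi*s) - (1/2)*Real.sin (6*Real.pi*s)
        - (1/2)*Real.sin (2*Real.pi*s) + (1/8)*Real.sin (8*Real.pi*s))
    - Real.sin (Real.pi*x) *
      (-(1/6)*Real.cos (6*Real.pi*s) - (1/4)*Real.cos (4*Real.pi*s)
        + (1/8)*Real.cos (8*Real.pi*s) + (1/2)*Real.cos (2*Real.pi*s)))

lemma hdF (x s : ℝ) : HasDerivAt (Ffun x)
    (Real.sin (5*Real.pi*s) * Real.sin (Real.pi*s)^2 * Real.sin (Real.pi*s - Real.pi*x)) s := by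
  have hA : HasDerivAt (fun s => (3/4)*Real.sin (4*Real.pi*s) - (1/2)*Real.sin (6*Real.pi*s)
        - (1/2)*Real.sin (2*Real.pi*s) + (1/8)*Real.sin (8*Real.pi*s))
      ((3/4)*(4*Real.pi*Real.cos (4*Real.pi*s)) - (1/2)*(6*Real.pi*Real.cos (6*Real.pi*s))
        - (1/2)*(2*Real.pi*Real.cos (2*Real.pi*s)) + (1/8)*(8*Real.pi*Real.cos (8*Real.pi*s))) s :=
    ((((hd_sin (4*Real.pi) s).const_mul (3/4)).sub ((hd_sin (6*Real.pi) s).const_mul (1/2))).sub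
      ((hd_sin (2*Real.pi) s).const_mul (1/2))).add ((hd_sin (8*Real.pi) s).const_mul (1/8))
  have hB : HasDerivAt (fun s => -(1/6)*Real.cos (6*Real.pi*s) - (1/4)*Real.cos (4*Real.pi*s)
        + (1/8)*Real.cos (8*Real.pi*s) + (1/2)*Real.cos (2*Real.pi*s))
      (-(1/6)*(-(6*Real.pi*Real.sin (6*Real.pi*s))) - (1/4)*(-(4*Real.pi*Real.sin (4*Real.pi*s)))
        + (1/8)*(-(8*Real.pi*Real.sin (8*Real.pi*s))) + (1/2)*(-(2*Real.pi*Real.sin (2*Real.pi*s)))) s :=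
    ((((hd_cos (6*Real.pi) s).const_mul (-(1/6))).sub ((hd_cos (4*Real.pi) s).const_mul (1/4))).add
      ((hd_cos (8*Real.pi) s).const_mul (1/8))).add ((hd_cos (2*Real.pi) s).const_mul (1/2))
  have h := (((hA.const_mul (Real.cos (Real.pi*x))).sub
      (hB.const_mul (Real.sin (Real.pi*x)))).const_mul (1/(8*Real.pi)))
  convert h using 1
  · rfl
  · rfl
  · rfl
  rw [Real.sin_sub]
  have h1 := idA (Real.pi*s)
  have h2 := idB (Real.pi*s)
  simp only [← mul_assoc] at h1 h2
  have hpi := Real.pi_ne_zero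
  have e : 1/(8*Real.pi)*Real.pi = 1/8 := by field_simp
  linear_combination (Real.cos (Real.pi*x)) * h1 - (Real.sin (Real.pi*x)) * h2
    - (Real.cos (Real.pi*x) * (3*Real.cos (4*Real.pi*s) - 3*Real.cos (6*Real.pi*s) - Real.cos (2*Real.pi*s) + Real.cos (8*Real.pi*s))
      - Real.sin (Real.pi*x) * (Real.sin (6*Real.pi*s) + Real.sin (4*Real.pi*s) - Real.sin (8*Real.pi*s) - Real.sin (2*Real.pi*s))) * e

lemma inner_eval (x : ℝ) : wTilde5 x = (1/Real.pi) * (Ffun x x - Ffun x 0) := by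
  unfold wTilde5
  congr 1
  apply intervalIntegral.integral_eq_sub_of_hasDerivAt (fun s _ => hdF x s)
  apply Continuous.intervalIntegrable
  fun_prop

noncomputable def phi5 (x : ℝ) : ℝ := (1/Real.pi^2) *
  (5/512 - (9/512)*Real.cos (2*Real.pi*x) + (11/768)*Real.cos (4*Real.pi*x)
    - (7/512)*Real.cos (6*Real.pi*x) + (7/512)*Real.cos (8*Real.pi*x)
    - (5/512)*Real.cos (10*Real.pi*x) + (1/256)*Real.cos (12*Real.pi*x)
    - (1/1536)*Real.cos (14*Real.pi*x))

lemma hval (x : ℝ) : Real.sin (5 * Real.pi * x) * wTilde5 x * Real.sin (Real.pi * x) ^ 2 = phi5 x := by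
  rw [inner_eval x]
  unfold Ffun phi5
  have h := idC (Real.pi*x)
  simp only [← mul_assoc] at h
  have hpi := Real.pi_ne_zero
  simp only [mul_zero, Real.sin_zero, Real.cos_zero]
  linear_combination (1/Real.pi^2) * h

noncomputable def Hfun (x : ℝ) : ℝ := (1/Real.pi^3) *
  ((5/512)*(Real.pi*x) - (9/1024)*Real.sin (2*Real.pi*x) + (11/3072)*Real.sin (4*Real.pi*x)
    - (7/3072)*Real.sin (6*Real.pi*x) + (7/4096)*Real.sin (8*Real.pi*x)
    - (1/1024)*Real.sin (10*Real.pi*x) + (1/3072)*Real.sin (12*Real.pi*x)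
    - (1/21504)*Real.sin (14*Real.pi*x))

lemma hdH (x : ℝ) : HasDerivAt Hfun (phi5 x) x := by
  have h : HasDerivAt (fun x => (5/512)*(Real.pi*x) - (9/1024)*Real.sin (2*Real.pi*x)
      + (11/3072)*Real.sin (4*Real.pi*x) - (7/3072)*Real.sin (6*Real.pi*x)
      + (7/4096)*Real.sin (8*Real.pi*x) - (1/1024)*Real.sin (10*Real.pi*x)
      + (1/3072)*Real.sin (12*Real.pi*x) - (1/21504)*Real.sin (14*Real.pi*x))
      ((5/512)*(Real.pi*1)
        - (9/1024)*(2*Real.pi*Real.cos (2*Real.pi*x))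
        + (11/3072)*(4*Real.pi*Real.cos (4*Real.pi*x)) - (7/3072)*(6*Real.pi*Real.cos (6*Real.pi*x))
        + (7/4096)*(8*Real.pi*Real.cos (8*Real.pi*x)) - (1/1024)*(10*Real.pi*Real.cos (10*Real.pi*x))
        + (1/3072)*(12*Real.pi*Real.cos (12*Real.pi*x)) - (1/21504)*(14*Real.pi*Real.cos (14*Real.pi*x))) x :=
    (((((((((hasDerivAt_id x).const_mul Real.pi).const_mul (5/512)).sub
      ((hd_sin (2*Real.pi) x).const_mul (9/1024))).add
      ((hd_sin (4*Real.pi) x).const_mul (11/3072))).sub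
      ((hd_sin (6*Real.pi) x).const_mul (7/3072))).add
      ((hd_sin (8*Real.pi) x).const_mul (7/4096))).sub
      ((hd_sin (10*Real.pi) x).const_mul (1/1024))).add
      ((hd_sin (12*Real.pi) x).const_mul (1/3072))).sub
      ((hd_sin (14*Real.pi) x).const_mul (1/21504))
  have h2 := h.const_mul (1/Real.pi^3)
  unfold Hfun phi5
  convert h2 using 1
  · rfl
  · rfl
  have hpi := Real.pi_ne_zero
  field_simp
  ring

lemma sinz (n : ℕ) : Real.sin (n*Real.pi) = 0 := Real.sin_nat_mul_pi n

/-- For `a(x) = sin(5πx)`: `-2 ∫₀¹ sin(5πx) w̃(x) sin²(πx) dx = -5/(256π²)`. -/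
theorem stmt_15 :
    -2 * ∫ x in (0:ℝ)..1,
        Real.sin (5 * Real.pi * x) * wTilde5 x * Real.sin (Real.pi * x) ^ 2
      = -(5 / (256 * Real.pi ^ 2)) := by
  have hint : IntervalIntegrable phi5 MeasureTheory.volume 0 1 := by
    apply Continuous.intervalIntegrable
    unfold phi5
    fun_prop
  simp only [hval]
  rw [intervalIntegral.integral_eq_sub_of_hasDerivAt (fun x _ => hdH x) hint]
  unfold Hfun
  have h2 : Real.sin (2*Real.pi) = 0 := by simpa using sinz 2
  have h4 : Real.sin (4*Real.pi) = 0 := by simpa using sinz 4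
  have h6 : Real.sin (6*Real.pi) = 0 := by simpa using sinz 6
  have h8 : Real.sin (8*Real.pi) = 0 := by simpa using sinz 8
  have h10 : Real.sin (10*Real.pi) = 0 := by simpa using sinz 10
  have h12 : Real.sin (12*Real.pi) = 0 := by simpa using sinz 12
  have h14 : Real.sin (14*Real.pi) = 0 := by simpa using sinz 14
  have hpi := Real.pi_ne_zero
  simp only [mul_one, mul_zero, Real.sin_zero, h2, h4, h6, h8, h10, h12, h14]
  field_simp
  ring
end

section
/- Let α < β be real numbers, λ ∈ ℝ, and ω < 0. Suppose L : [α,β] → ℝ is twice continuously differentiable with L(x) > 0 for all x ∈ [α,β] and −L''(x) = λ L(x) + ω L(x)² for all x ∈ [α,β]. Let φ(x) = sin(π(x − α)/(β − α)). Then ((π/(β − α))² − λ) ∫_α^β L(x) φ(x) dx < (π/(β − α)) (L(α) + L(β)). -/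
open Set

/-- For `α < β`, `ω < 0`, and a positive twice continuously differentiable solution `L` of
`-L'' = λL + ωL²` on `[α,β]`, with `φ(x) = sin(π(x−α)/(β−α))`:
`((π/(β−α))² − λ) ∫_α^β L φ < (π/(β−α)) (L(α) + L(β))`. -/
theorem stmt_18 (α β lam ω : ℝ) (hab : α < β) (hω : ω < 0)
    (L L' L'' : ℝ → ℝ)
    (hL' : ∀ x ∈ Icc α β, HasDerivWithinAt L (L' x) (Icc α β) x)
    (hL'' : ∀ x ∈ Icc α β, HasDerivWithinAt L' (L'' x) (Icc α β) x)
    (hcont : ContinuousOn L'' (Icc α β))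
    (hpos : ∀ x ∈ Icc α β, 0 < L x)
    (heq : ∀ x ∈ Icc α β, -(L'' x) = lam * L x + ω * L x ^ 2) :
    ((Real.pi / (β - α)) ^ 2 - lam)
        * ∫ x in α..β, L x * Real.sin (Real.pi * (x - α) / (β - α))
      < (Real.pi / (β - α)) * (L α + L β) := by
  have hba : (0:ℝ) < β - α := sub_pos.mpr hab
  set k : ℝ := Real.pi / (β - α) with hk
  have hkpos : 0 < k := div_pos Real.pi_pos hba
  set φ : ℝ → ℝ := fun x => Real.sin (k * (x - α)) with hφdef
  set φ' : ℝ → ℝ := fun x => k * Real.cos (k * (x - α)) with hφ'def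
  have hφeq : ∀ x, Real.sin (Real.pi * (x - α) / (β - α)) = φ x := by
    intro x
    have : Real.pi * (x - α) / (β - α) = k * (x - α) := by
      rw [hk]; ring
    rw [this]
  have hφd : ∀ x, HasDerivAt φ (φ' x) x := by
    intro x
    have h1 : HasDerivAt (fun x : ℝ => k * (x - α)) k x := by
      simpa using ((hasDerivAt_id x).sub_const α).const_mul k
    show HasDerivAt (fun x => Real.sin (k * (x - α))) (k * Real.cos (k * (x - α))) x
    exact h1.sin.congr_deriv (by ring)
  have hφ'd : ∀ x, HasDerivAt φ' (-(k^2 * φ x)) x := by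
    intro x
    have h1 : HasDerivAt (fun x : ℝ => k * (x - α)) k x := by
      simpa using ((hasDerivAt_id x).sub_const α).const_mul k
    have h2 := ((Real.hasDerivAt_cos (k * (x - α))).comp x h1).const_mul k
    show HasDerivAt (fun x => k * Real.cos (k * (x - α))) (-(k^2 * Real.sin (k * (x - α)))) x
    exact (h1.cos.const_mul k).congr_deriv (by ring)
  have hkβ : k * (β - α) = Real.pi := by
    rw [hk]; field_simp
  have hφα : φ α = 0 := by simp [hφdef]
  have hφβ : φ β = 0 := by simp [hφdef, hkβ]
  have hφ'α : φ' α = k := by simp [hφ'def]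
  have hφ'β : φ' β = -k := by simp [hφ'def, hkβ]
  -- continuity facts
  have hLcont : ContinuousOn L (Icc α β) := fun x hx => (hL' x hx).continuousWithinAt
  have hL'cont : ContinuousOn L' (Icc α β) := fun x hx => (hL'' x hx).continuousWithinAt
  have hφcont : Continuous φ := by
    apply Real.continuous_sin.comp; continuity
  have hφ'cont : Continuous φ' := by
    apply Continuous.mul continuous_const
    apply Real.continuous_cos.comp; continuity
  have huIcc : uIcc α β = Icc α β := uIcc_of_le hab.le
  -- the Wronskian-type function
  set W : ℝ → ℝ := fun x => L' x * φ x - L x * φ' x with hWdef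
  set W' : ℝ → ℝ := fun x => L'' x * φ x + k^2 * (L x * φ x) with hW'def
  have hWcont : ContinuousOn W (Icc α β) :=
    (hL'cont.mul hφcont.continuousOn).sub (hLcont.mul hφ'cont.continuousOn)
  have hWderiv : ∀ x ∈ Ioo α β, HasDerivWithinAt W (W' x) (Ioi x) x := by
    intro x hx
    have hxI : x ∈ Icc α β := Ioo_subset_Icc_self hx
    have hmem : Icc α β ∈ nhds x := Icc_mem_nhds hx.1 hx.2
    have hLd : HasDerivAt L (L' x) x := (hL' x hxI).hasDerivAt hmem
    have hL'd : HasDerivAt L' (L'' x) x := (hL'' x hxI).hasDerivAt hmem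
    have : HasDerivAt W (W' x) x := by
      have := (hL'd.mul (hφd x)).sub (hLd.mul (hφ'd x))
      exact this.congr_deriv (by show _ = L'' x * φ x + k^2 * (L x * φ x); ring)
    exact this.hasDerivWithinAt
  have hW'cont : ContinuousOn W' (Icc α β) :=
    (hcont.mul hφcont.continuousOn).add
      (continuousOn_const.mul (hLcont.mul hφcont.continuousOn))
  have hW'int : IntervalIntegrable W' MeasureTheory.volume α β :=
    (hW'cont.mono (by rw [huIcc])).intervalIntegrable
  have hFTC : ∫ x in α..β, W' x = W β - W α :=
    intervalIntegral.integral_eq_sub_of_hasDeriv_right_of_le hab.le hWcont hWderiv hW'int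
  have hWβ : W β - W α = k * (L α + L β) := by
    simp [hWdef, hφα, hφβ, hφ'α, hφ'β]; ring
  -- rewrite W' using the ODE
  have hint1 : IntervalIntegrable (fun x => L x * φ x) MeasureTheory.volume α β :=
    ((hLcont.mul hφcont.continuousOn).mono (by rw [huIcc])).intervalIntegrable
  have hint2 : IntervalIntegrable (fun x => L x ^ 2 * φ x) MeasureTheory.volume α β :=
    (((hLcont.pow 2).mul hφcont.continuousOn).mono (by rw [huIcc])).intervalIntegrable
  have hcongr : ∫ x in α..β, W' x
      = ∫ x in α..β, ((k^2 - lam) * (L x * φ x) - ω * (L x ^ 2 * φ x)) := by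
    apply intervalIntegral.integral_congr
    intro x hx
    rw [huIcc] at hx
    have := heq x hx
    have hL'' : L'' x = -(lam * L x + ω * L x ^ 2) := by linarith
    simp [hW'def, hL'']; ring
  have hsplit : ∫ x in α..β, ((k^2 - lam) * (L x * φ x) - ω * (L x ^ 2 * φ x))
      = (k^2 - lam) * (∫ x in α..β, L x * φ x) - ω * ∫ x in α..β, L x ^ 2 * φ x := by
    rw [intervalIntegral.integral_sub (hint1.const_mul _) (hint2.const_mul _),
      intervalIntegral.integral_const_mul, intervalIntegral.integral_const_mul]
  -- positivity of ∫ L² φ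
  have hIpos : 0 < ∫ x in α..β, L x ^ 2 * φ x := by
    apply intervalIntegral.intervalIntegral_pos_of_pos_on hint2 _ hab
    intro x hx
    have hxI : x ∈ Icc α β := Ioo_subset_Icc_self hx
    have hφpos : 0 < φ x := by
      apply Real.sin_pos_of_pos_of_lt_pi
      · exact mul_pos hkpos (sub_pos.mpr hx.1)
      · calc k * (x - α) < k * (β - α) := by
              apply mul_lt_mul_of_pos_left _ hkpos
              linarith [hx.2]
          _ = Real.pi := hkβ
    exact mul_pos (pow_pos (hpos x hxI) 2) hφpos
  have key : (k^2 - lam) * (∫ x in α..β, L x * φ x) - ω * (∫ x in α..β, L x ^ 2 * φ x)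
      = k * (L α + L β) := by
    rw [← hsplit, ← hcongr, hFTC, hWβ]
  have hneg : ω * (∫ x in α..β, L x ^ 2 * φ x) < 0 := mul_neg_of_neg_of_pos hω hIpos
  have hgoal : ∫ x in α..β, L x * Real.sin (Real.pi * (x - α) / (β - α))
      = ∫ x in α..β, L x * φ x := by
    apply intervalIntegral.integral_congr
    intro x _
    simp only [hφeq]
  rw [hgoal]
  linarith
end

section
/- Let α < β be real numbers, ω < 0, λ₀ ∈ ℝ and C > 0. Suppose that for every λ ≤ λ₀ there is a twice continuously differentiable function L_λ : [α,β] → ℝ with L_λ > 0 on [α,β], −L_λ''(x) = λ L_λ(x) + ω L_λ(x)² on [α,β], and L_λ(α) ≤ C, L_λ(β) ≤ C. Let φ(x) = sin(π(x − α)/(β − α)). Then ∫_α^β L_λ(x) φ(x) dx → 0 as λ → −∞. -/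
open Set

/-- Let `α < β`, `ω < 0`, `λ₀ ∈ ℝ`, `C > 0`, and suppose that for every `λ ≤ λ₀` the
function `L λ` is a positive twice continuously differentiable solution of
`-L'' = λL + ωL²` on `[α,β]` with `L λ α ≤ C` and `L λ β ≤ C`. Then, with
`φ(x) = sin(π(x−α)/(β−α))`, `∫_α^β L λ φ → 0` as `λ → −∞`. -/
theorem stmt_19 (α β ω lam₀ C : ℝ) (hab : α < β) (hω : ω < 0) (hC : 0 < C)
    (L : ℝ → ℝ → ℝ)
    (h : ∀ lam ≤ lam₀, ∃ L' L'' : ℝ → ℝ,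
      (∀ x ∈ Icc α β, HasDerivWithinAt (L lam) (L' x) (Icc α β) x) ∧
      (∀ x ∈ Icc α β, HasDerivWithinAt L' (L'' x) (Icc α β) x) ∧
      ContinuousOn L'' (Icc α β) ∧
      (∀ x ∈ Icc α β, 0 < L lam x) ∧
      (∀ x ∈ Icc α β, -(L'' x) = lam * L lam x + ω * L lam x ^ 2) ∧
      L lam α ≤ C ∧ L lam β ≤ C) :
    Filter.Tendsto
      (fun lam => ∫ x in α..β, L lam x * Real.sin (Real.pi * (x - α) / (β - α)))
      Filter.atBot (nhds 0) := by
  have hba : (0:ℝ) < β - α := sub_pos.mpr hab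
  set k : ℝ := Real.pi / (β - α) with hk
  have hkpos : 0 < k := div_pos Real.pi_pos hba
  set φ : ℝ → ℝ := fun x => Real.sin (k * (x - α)) with hφdef
  have hφeq : ∀ x, Real.pi * (x - α) / (β - α) = k * (x - α) := by
    intro x; rw [hk]; ring
  have hφ' : ∀ x, HasDerivAt φ (k * Real.cos (k * (x - α))) x := by
    intro x
    have h1 : HasDerivAt (fun x => k * (x - α)) k x := by
      simpa using ((hasDerivAt_id x).sub_const α).const_mul k
    have h2 := (Real.hasDerivAt_sin (k * (x - α))).comp x h1
    rw [mul_comm (Real.cos _)] at h2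
    exact h2
  have hφ'' : ∀ x, HasDerivAt (fun x => k * Real.cos (k * (x - α))) (-(k^2) * φ x) x := by
    intro x
    have h1 : HasDerivAt (fun x => k * (x - α)) k x := by
      simpa using ((hasDerivAt_id x).sub_const α).const_mul k
    have h2 := ((Real.hasDerivAt_cos (k * (x - α))).comp x h1).const_mul k
    refine h2.congr_deriv ?_
    simp only [hφdef]; ring
  have hkβ : k * (β - α) = Real.pi := by
    rw [hk]; field_simp
  have hφα : φ α = 0 := by simp [hφdef]
  have hφβ : φ β = 0 := by simp [hφdef, hkβ]
  have hcosα : Real.cos (k * (α - α)) = 1 := by simp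
  have hcosβ : Real.cos (k * (β - α)) = -1 := by rw [hkβ]; simp
  have hφnonneg : ∀ x ∈ Icc α β, 0 ≤ φ x := by
    intro x hx
    apply Real.sin_nonneg_of_nonneg_of_le_pi
    · exact mul_nonneg hkpos.le (by linarith [hx.1])
    · calc k * (x - α) ≤ k * (β - α) := by
            apply mul_le_mul_of_nonneg_left _ hkpos.le
            linarith [hx.2]
        _ = Real.pi := hkβ
  have hφcont : Continuous φ := by
    exact Real.continuous_sin.comp (by continuity)
  -- key bound
  have key : ∀ lam ≤ min lam₀ (k^2 - 1),
      0 ≤ (∫ x in α..β, L lam x * φ x) ∧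
      (∫ x in α..β, L lam x * φ x) ≤ 2 * C * k / (k^2 - lam) := by
    intro lam hlam
    obtain ⟨L', L'', hL', hL'', hL''c, hLpos, heq, hα', hβ'⟩ :=
      h lam (le_trans hlam (min_le_left _ _))
    have hLcont : ContinuousOn (L lam) (Icc α β) :=
      fun x hx => (hL' x hx).continuousWithinAt
    have hL'cont : ContinuousOn L' (Icc α β) :=
      fun x hx => (hL'' x hx).continuousWithinAt
    have hlam1 : 1 ≤ k^2 - lam := by
      have := le_trans hlam (min_le_right _ _); linarith
    have hden : 0 < k^2 - lam := by linarith
    set G : ℝ → ℝ := fun x => L'' x * φ x - L lam x * (-(k^2) * φ x) with hGdef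
    set W : ℝ → ℝ := fun x => L' x * φ x - L lam x * (k * Real.cos (k * (x - α))) with hWdef
    have hWcont : ContinuousOn W (Icc α β) := by
      apply ContinuousOn.sub
      · exact hL'cont.mul hφcont.continuousOn
      · exact hLcont.mul (Continuous.continuousOn (by fun_prop))
    have hWderiv : ∀ x ∈ Ioo α β, HasDerivWithinAt W (G x) (Ioi x) x := by
      intro x hx
      have hmem : Icc α β ∈ nhds x := Icc_mem_nhds hx.1 hx.2
      have hd1 : HasDerivAt (L lam) (L' x) x :=
        (hL' x (Ioo_subset_Icc_self hx)).hasDerivAt hmem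
      have hd2 : HasDerivAt L' (L'' x) x :=
        (hL'' x (Ioo_subset_Icc_self hx)).hasDerivAt hmem
      have := (hd2.mul (hφ' x)).sub (hd1.mul (hφ'' x))
      have h2 : HasDerivAt W (G x) x := by
        refine this.congr_deriv ?_
        simp only [hGdef]; ring
      exact h2.hasDerivWithinAt
    have hGcont : ContinuousOn G (Icc α β) := by
      apply ContinuousOn.sub
      · exact hL''c.mul hφcont.continuousOn
      · exact hLcont.mul (Continuous.continuousOn (by fun_prop))
    have hGint : IntervalIntegrable G MeasureTheory.volume α β :=
      hGcont.intervalIntegrable_of_Icc hab.le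
    have hFTC : (∫ x in α..β, G x) = W β - W α :=
      intervalIntegral.integral_eq_sub_of_hasDeriv_right_of_le hab.le hWcont hWderiv hGint
    have hWβ : W β = k * L lam β := by
      simp [hWdef, hφβ, hcosβ]; ring
    have hWα : W α = -(k * L lam α) := by
      simp [hWdef, hφα, hcosα]; ring
    have hbound : (∫ x in α..β, G x) ≤ 2 * C * k := by
      rw [hFTC, hWβ, hWα]
      have h1 := hα'
      have h2 := hβ'
      nlinarith [hkpos]
    -- rewrite G using the equation
    have hGeq : ∀ x ∈ Icc α β,
        G x = (k^2 - lam) * (L lam x * φ x) - ω * (L lam x ^ 2 * φ x) := by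
      intro x hx
      have h2 : L'' x = -(lam * L lam x + ω * L lam x ^ 2) := by linarith [heq x hx]
      simp only [hGdef, h2]
      ring
    have hI1 : IntervalIntegrable (fun x => L lam x * φ x) MeasureTheory.volume α β :=
      (hLcont.mul hφcont.continuousOn).intervalIntegrable_of_Icc hab.le
    have hI2 : IntervalIntegrable (fun x => L lam x ^ 2 * φ x) MeasureTheory.volume α β :=
      ((hLcont.pow 2).mul hφcont.continuousOn).intervalIntegrable_of_Icc hab.le
    have hsplit : (∫ x in α..β, G x) =
        (k^2 - lam) * (∫ x in α..β, L lam x * φ x) - ω * (∫ x in α..β, L lam x ^ 2 * φ x) := by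
      rw [← intervalIntegral.integral_const_mul, ← intervalIntegral.integral_const_mul,
        ← intervalIntegral.integral_sub (hI1.const_mul _) (hI2.const_mul _)]
      apply intervalIntegral.integral_congr
      intro x hx
      rw [uIcc_of_le hab.le] at hx
      exact hGeq x hx
    have hJnonneg : 0 ≤ ∫ x in α..β, L lam x ^ 2 * φ x := by
      apply intervalIntegral.integral_nonneg hab.le
      intro x hx
      exact mul_nonneg (sq_nonneg _) (hφnonneg x hx)
    have hInonneg : 0 ≤ ∫ x in α..β, L lam x * φ x := by
      apply intervalIntegral.integral_nonneg hab.le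
      intro x hx
      exact mul_nonneg (hLpos x hx).le (hφnonneg x hx)
    refine ⟨hInonneg, ?_⟩
    rw [le_div_iff₀ hden]
    nlinarith [mul_nonneg (neg_nonneg.mpr hω.le) hJnonneg]
  -- squeeze
  have hupper : Filter.Tendsto (fun lam => 2 * C * k / (k^2 - lam)) Filter.atBot (nhds 0) := by
    have h1 : Filter.Tendsto (fun lam : ℝ => k^2 - lam) Filter.atBot Filter.atTop := by
      have := Filter.tendsto_atTop_add_const_left Filter.atBot (k^2)
        (Filter.tendsto_neg_atBot_atTop : Filter.Tendsto (fun x : ℝ => -x) Filter.atBot Filter.atTop)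
      simpa [sub_eq_add_neg] using this
    have h2 := h1.inv_tendsto_atTop
    have h3 := h2.const_mul (2 * C * k)
    simpa [div_eq_mul_inv] using h3
  have hmain : Filter.Tendsto (fun lam => ∫ x in α..β, L lam x * φ x)
      Filter.atBot (nhds 0) := by
    apply tendsto_of_tendsto_of_tendsto_of_le_of_le' tendsto_const_nhds hupper
    · exact Filter.eventually_atBot.mpr ⟨min lam₀ (k^2 - 1), fun lam hl => (key lam hl).1⟩
    · exact Filter.eventually_atBot.mpr ⟨min lam₀ (k^2 - 1), fun lam hl => (key lam hl).2⟩
  have : (fun lam => ∫ x in α..β, L lam x * Real.sin (Real.pi * (x - α) / (β - α)))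
      = fun lam => ∫ x in α..β, L lam x * φ x := by
    funext lam
    apply intervalIntegral.integral_congr
    intro x _
    show L lam x * Real.sin (Real.pi * (x - α) / (β - α)) = L lam x * φ x
    rw [hφeq x]
  rw [this]
  exact hmain
end
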